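/- Let q be a power of an odd prime. The center of the group 𝓜 equals { diag(a,a,1) : a ∈ 𝔽_{q²}, a^{q+1} = 1 }, which is a cyclic group of order q+1. -/

import Mathlib

open Matrix Polynomial

theorem stmt_2 (p : ℕ) (hp : p.Prime) (hodd : p ≠ 2) (h : ℕ) (hh : 1 ≤ h)
    (q : ℕ) (hq : q = p ^ h)
    (F : Type) [Field F] [Fintype F] (hF : Fintype.card F = q ^ 2)
    (M : Subgroup (Matrix.GeneralLinearGroup (Fin 3) F))
    (hM : ∀ g : Matrix.GeneralLinearGroup (Fin 3) F, g ∈ M ↔ ∃ a b c d : F,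
      (g : Matrix (Fin 3) (Fin 3) F) = !![a, b, 0; c, d, 0; 0, 0, 1] ∧
      a * c ^ q - a ^ q * c = 0 ∧ b * d ^ q - b ^ q * d = 0 ∧
      b * c ^ q - a ^ q * d = -1 ∧ a * d ^ q - b ^ q * c = 1) :
    (∀ g : M, g ∈ Subgroup.center M ↔ ∃ a : F, a ^ (q + 1) = 1 ∧
      ((g : Matrix.GeneralLinearGroup (Fin 3) F) : Matrix (Fin 3) (Fin 3) F)
        = !![a, 0, 0; 0, a, 0; 0, 0, 1]) ∧
    IsCyclic (Subgroup.center M) ∧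
    Nat.card (Subgroup.center M) = q + 1 := by
  have hq3 : 3 ≤ q := by
    have hp3 : 3 ≤ p := by have := hp.two_le; omega
    calc 3 ≤ p := hp3
      _ ≤ p ^ h := Nat.le_self_pow (by omega) p
      _ = q := hq.symm
  have hqodd : Odd q := hq ▸ (hp.odd_of_ne_two hodd).pow
  have hm1 : (-1 : F) ^ q = -1 := hqodd.neg_one_pow
  have h1q : (1 : F) ^ q = 1 := one_pow q
  have h0q : (0 : F) ^ q = 0 := zero_pow (by omega)
  -- the special elements w and u of M
  have hw : ∃ w : Matrix.GeneralLinearGroup (Fin 3) F,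
      (w : Matrix (Fin 3) (Fin 3) F) = !![0,1,0;-1,0,0;0,0,1] ∧ w ∈ M := by
    refine ⟨⟨!![0,1,0;-1,0,0;0,0,1], !![0,-1,0;1,0,0;0,0,1], ?_, ?_⟩, rfl, ?_⟩
    · ext i j
      fin_cases i <;> fin_cases j <;>
        simp [Matrix.mul_apply, Fin.sum_univ_three, Matrix.one_apply, Matrix.vecHead,
          Matrix.vecTail]
    · ext i j
      fin_cases i <;> fin_cases j <;>
        simp [Matrix.mul_apply, Fin.sum_univ_three, Matrix.one_apply, Matrix.vecHead,
          Matrix.vecTail]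
    · rw [hM]
      exact ⟨0, 1, -1, 0, rfl, by rw [h0q]; ring, by rw [h0q]; ring,
        by rw [hm1]; ring, by rw [h1q, h0q]; ring⟩
  have hu : ∃ u : Matrix.GeneralLinearGroup (Fin 3) F,
      (u : Matrix (Fin 3) (Fin 3) F) = !![1,1,0;0,1,0;0,0,1] ∧ u ∈ M := by
    refine ⟨⟨!![1,1,0;0,1,0;0,0,1], !![1,-1,0;0,1,0;0,0,1], ?_, ?_⟩, rfl, ?_⟩
    · ext i j
      fin_cases i <;> fin_cases j <;>
        simp [Matrix.mul_apply, Fin.sum_univ_three, Matrix.one_apply, Matrix.vecHead,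
          Matrix.vecTail]
    · ext i j
      fin_cases i <;> fin_cases j <;>
        simp [Matrix.mul_apply, Fin.sum_univ_three, Matrix.one_apply, Matrix.vecHead,
          Matrix.vecTail]
    · rw [hM]
      exact ⟨1, 1, 0, 1, rfl, by rw [h0q]; ring, by rw [h1q]; ring,
        by rw [h0q, h1q]; ring, by rw [h1q]; ring⟩
  obtain ⟨w, hwmat, hwM⟩ := hw
  obtain ⟨u, humat, huM⟩ := hu
  -- diag matrices give units in M
  have hunit : ∀ a : F, a ^ (q+1) = 1 →
      ∃ g : Matrix.GeneralLinearGroup (Fin 3) F,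
        (g : Matrix (Fin 3) (Fin 3) F) = !![a,0,0;0,a,0;0,0,1] ∧ g ∈ M := by
    intro a ha
    have key : a * a ^ q = 1 := by rw [← pow_succ']; exact ha
    refine ⟨⟨!![a,0,0;0,a,0;0,0,1], !![a^q,0,0;0,a^q,0;0,0,1], ?_, ?_⟩, rfl, ?_⟩
    · ext i j
      fin_cases i <;> fin_cases j <;>
        simp [Matrix.mul_apply, Fin.sum_univ_three, Matrix.one_apply, Matrix.vecHead,
          Matrix.vecTail, key, mul_comm]
    · ext i j
      fin_cases i <;> fin_cases j <;>
        simp [Matrix.mul_apply, Fin.sum_univ_three, Matrix.one_apply, Matrix.vecHead,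
          Matrix.vecTail, key, mul_comm]
    · rw [hM]
      refine ⟨a, 0, 0, a, rfl, by rw [h0q]; ring, by rw [h0q]; ring, ?_, ?_⟩
      · rw [h0q]; rw [show a ^ q * a = a * a ^ q by ring, key]; ring
      · rw [h0q]; rw [show a * a ^ q = a * a ^ q from rfl, key]; ring
  -- diag units are central
  have hcomm : ∀ (x g : Matrix.GeneralLinearGroup (Fin 3) F), x ∈ M →
      ∀ a : F, (g : Matrix (Fin 3) (Fin 3) F) = !![a,0,0;0,a,0;0,0,1] → x * g = g * x := by
    intro x g hx a hgm
    obtain ⟨a', b', c', d', hxm, -, -, -, -⟩ := (hM x).mp hx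
    apply Units.ext
    show (x : Matrix (Fin 3) (Fin 3) F) * g = (g : Matrix (Fin 3) (Fin 3) F) * x
    rw [hxm, hgm]
    ext i j
    fin_cases i <;> fin_cases j <;>
      simp [Matrix.mul_apply, Fin.sum_univ_three, Matrix.vecHead, Matrix.vecTail, mul_comm]
  -- characterization of center elements
  have hchar : ∀ g : M, g ∈ Subgroup.center M → ∃ a : F, a ^ (q + 1) = 1 ∧
      ((g : Matrix.GeneralLinearGroup (Fin 3) F) : Matrix (Fin 3) (Fin 3) F)
        = !![a, 0, 0; 0, a, 0; 0, 0, 1] := by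
    intro g hgc
    obtain ⟨a, b, c, d, hgm, h1, h2, h3, h4⟩ := (hM g).mp g.2
    have hcw := Subgroup.mem_center_iff.mp hgc ⟨w, hwM⟩
    have hcu := Subgroup.mem_center_iff.mp hgc ⟨u, huM⟩
    have hcw' : (w : Matrix (Fin 3) (Fin 3) F) *
        ((g : Matrix.GeneralLinearGroup (Fin 3) F) : Matrix (Fin 3) (Fin 3) F) =
        ((g : Matrix.GeneralLinearGroup (Fin 3) F) : Matrix (Fin 3) (Fin 3) F) * w := by
      have := congrArg (fun z : M => ((z : Matrix.GeneralLinearGroup (Fin 3) F) :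
        Matrix (Fin 3) (Fin 3) F)) hcw
      simpa using this
    have hcu' : (u : Matrix (Fin 3) (Fin 3) F) *
        ((g : Matrix.GeneralLinearGroup (Fin 3) F) : Matrix (Fin 3) (Fin 3) F) =
        ((g : Matrix.GeneralLinearGroup (Fin 3) F) : Matrix (Fin 3) (Fin 3) F) * u := by
      have := congrArg (fun z : M => ((z : Matrix.GeneralLinearGroup (Fin 3) F) :
        Matrix (Fin 3) (Fin 3) F)) hcu
      simpa using this
    rw [hwmat, hgm] at hcw'
    rw [humat, hgm] at hcu'
    have ew00 := congrFun (congrFun hcw' 0) 0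
    have ew01 := congrFun (congrFun hcw' 0) 1
    simp [Matrix.mul_apply, Fin.sum_univ_three, Matrix.vecHead, Matrix.vecTail] at ew00 ew01
    have eu00 := congrFun (congrFun hcu' 0) 0
    simp [Matrix.mul_apply, Fin.sum_univ_three, Matrix.vecHead, Matrix.vecTail] at eu00
    -- ew00 : c = -b ; ew01 : d = a ; eu00 : a + c = a
    have hc0 : c = 0 := by linear_combination eu00
    have hb0 : b = 0 := by linear_combination ew00 - hc0
    have hda : d = a := by linear_combination ew01
    refine ⟨a, ?_, ?_⟩
    · have h3' := h3
      rw [hb0, hc0, hda] at h3'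
      rw [pow_succ]
      linear_combination -h3'
    · rw [hgm, hb0, hc0, hda]
  -- the three goals
  obtain ⟨z, hz⟩ : ∃ z : F, IsPrimitiveRoot z (q + 1) := by
    obtain ⟨gen, hgen⟩ := IsCyclic.exists_ofOrder_eq_natCard (α := Fˣ)
    have hcardu : Nat.card Fˣ = q ^ 2 - 1 := by
      rw [Nat.card_units, Nat.card_eq_fintype_card, hF]
    have hfact : q ^ 2 - 1 = (q - 1) * (q + 1) := by
      obtain ⟨m, rfl⟩ : ∃ m, q = m + 1 := ⟨q - 1, by omega⟩
      simp only [Nat.add_sub_cancel]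
      apply Nat.sub_eq_of_eq_add
      ring
    refine ⟨((gen ^ (q - 1) : Fˣ) : F), ?_⟩
    have horder : orderOf ((gen ^ (q - 1) : Fˣ) : F) = q + 1 := by
      rw [orderOf_units, orderOf_pow, hgen, hcardu, hfact,
        Nat.gcd_eq_right ⟨q + 1, by ring⟩, Nat.mul_div_cancel_left _ (by omega)]
    exact horder ▸ IsPrimitiveRoot.orderOf _
  -- center elements as a subtype of F
  have hcent_of : ∀ a : F, a ^ (q + 1) = 1 →
      ∃ g : M, g ∈ Subgroup.center M ∧
        ((g : Matrix.GeneralLinearGroup (Fin 3) F) : Matrix (Fin 3) (Fin 3) F)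
          = !![a, 0, 0; 0, a, 0; 0, 0, 1] := by
    intro a ha
    obtain ⟨g, hgm, hgM⟩ := hunit a ha
    refine ⟨⟨g, hgM⟩, Subgroup.mem_center_iff.mpr fun x => ?_, hgm⟩
    exact Subtype.ext (hcomm x g x.2 a hgm)
  constructor
  · intro g
    constructor
    · exact hchar g
    · rintro ⟨a, ha, hgm⟩
      obtain ⟨g', hg'c, hg'm⟩ := hcent_of a ha
      have : g = g' := Subtype.ext (Units.ext (hgm.trans hg'm.symm))
      rw [this]; exact hg'c
  have hinj : Function.Injective (fun g : Subgroup.center M =>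
      (((g : M) : Matrix.GeneralLinearGroup (Fin 3) F) : Matrix (Fin 3) (Fin 3) F) 0 0) := by
    intro x y hxy
    obtain ⟨ax, hax, hx⟩ := hchar x.1 x.2
    obtain ⟨ay, hay, hy⟩ := hchar y.1 y.2
    simp only [hx, hy] at hxy
    have : ax = ay := by simpa using hxy
    refine Subtype.ext (Subtype.ext (Units.ext ?_))
    rw [hx, hy, this]
  constructor
  · -- cyclicity via injection into F
    refine isCyclic_of_subgroup_isDomain (R := F) ?_ ?_
    · refine {
        toFun := fun g =>
          (((g : M) : Matrix.GeneralLinearGroup (Fin 3) F) : Matrix (Fin 3) (Fin 3) F) 0 0,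
        map_one' := by simp [Matrix.one_apply],
        map_mul' := ?_ }
      intro x y
      obtain ⟨ax, hax, hx⟩ := hchar x.1 x.2
      obtain ⟨ay, hay, hy⟩ := hchar y.1 y.2
      show ((((x * y : Subgroup.center M) : M) : Matrix.GeneralLinearGroup (Fin 3) F) :
        Matrix (Fin 3) (Fin 3) F) 0 0 = _
      simp only [Subgroup.coe_mul, Units.val_mul, hx, hy]
      simp [Matrix.mul_apply, Fin.sum_univ_three, Matrix.vecHead, Matrix.vecTail]
    · exact hinj
  · -- cardinality
    have hbij : Function.Bijective (fun g : Subgroup.center M =>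
        (⟨(((g : M) : Matrix.GeneralLinearGroup (Fin 3) F) : Matrix (Fin 3) (Fin 3) F) 0 0, by
          obtain ⟨a, ha, hm⟩ := hchar g.1 g.2
          rw [hm]
          simpa using ha⟩ : {a : F // a ^ (q + 1) = 1})) := by
      constructor
      · intro x y hxy
        exact hinj (congrArg Subtype.val hxy)
      · rintro ⟨a, ha⟩
        obtain ⟨g, hgc, hgm⟩ := hcent_of a ha
        refine ⟨⟨g, hgc⟩, ?_⟩
        apply Subtype.ext
        show (((g : Matrix.GeneralLinearGroup (Fin 3) F)) : Matrix (Fin 3) (Fin 3) F) 0 0 = a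
        rw [hgm]
        simp
    rw [Nat.card_eq_of_bijective _ hbij]
    classical
    rw [Nat.card_eq_fintype_card, Fintype.card_subtype]
    have hfe : (Finset.univ.filter fun a : F => a ^ (q + 1) = 1)
        = Polynomial.nthRootsFinset (q + 1) (1 : F) := by
      ext x
      simp [Polynomial.mem_nthRootsFinset (show 0 < q + 1 by omega)]
    rw [hfe, hz.card_nthRootsFinset]
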